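/- The Radon-type map R, defined by RF(x,t) = ∫_{ℝ²} F(x,(y₁,y₂,t)) dy₁dy₂, is a continuous linear map from 𝒮(ℝ³×ℝ³) to 𝒮(ℝ³×ℝ); moreover, if F is SO(3)-invariant then RF is K'-invariant. -/

import Mathlib

open MeasureTheory Complex Matrix

noncomputable section

abbrev V3 := Fin 3 → ℝ
abbrev Mat3 := Matrix (Fin 3) (Fin 3) ℝ

instance : MeasurableSpace Mat3 := (inferInstance : MeasurableSpace (Fin 3 → Fin 3 → ℝ))

/-- The set of special orthogonal 3×3 real matrices. -/
def SO3 : Set Mat3 := {A | A * A.transpose = 1 ∧ A.det = 1}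

/-- `SO(3)`-invariance of a function on `ℝ³ × ℝ³` (simultaneous action on both factors). -/
def Inv3 (F : V3 × V3 → ℂ) : Prop :=
  ∀ k ∈ SO3, ∀ x y : V3, F (k.mulVec x, k.mulVec y) = F (x, y)

/-- The orthogonal group `O(2)` as a set of 2×2 matrices. -/
def O2 : Set (Matrix (Fin 2) (Fin 2) ℝ) := {A | A * A.transpose = 1}

/-- The action of `A ∈ O(2)` on `ℝ³ × ℝ`:
`A·(x₁,x₂,x₃,t) = (A(x₁,x₂), (det A)x₃, (det A)t)`. -/
def KAct (A : Matrix (Fin 2) (Fin 2) ℝ) (p : (Fin 3 → ℝ) × ℝ) : (Fin 3 → ℝ) × ℝ :=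
  (![A.mulVec ![p.1 0, p.1 1] 0, A.mulVec ![p.1 0, p.1 1] 1, A.det * p.1 2], A.det * p.2)

/-- `K'`-invariance of a function on `ℝ³ × ℝ`. -/
def InvK' (G : (Fin 3 → ℝ) × ℝ → ℂ) : Prop := ∀ A ∈ O2, ∀ p, G (KAct A p) = G p

/-- The Radon-type map: `RF(x,t) = ∫_{ℝ²} F(x, (y₁, y₂, t)) dy₁ dy₂`. -/
def RadonT (F : (Fin 3 → ℝ) × (Fin 3 → ℝ) → ℂ) (x : Fin 3 → ℝ) (t : ℝ) : ℂ :=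
  ∫ w : ℝ × ℝ, F (x, ![w.1, w.2, t])


abbrev E6 := EuclideanSpace ℝ (Fin 6)
abbrev E4 := EuclideanSpace ℝ (Fin 4)

lemma vec6_four {α : Type*} (a b c d e f : α) : ![a,b,c,d,e,f] 4 = e := rfl
lemma vec6_five {α : Type*} (a b c d e f : α) : ![a,b,c,d,e,f] 5 = f := rfl

def e6L : E6 ≃ₗ[ℝ] V3 × V3 where
  toFun z := (fun i => z (Fin.castLE (by omega) i), fun i => z ⟨(i : ℕ) + 3, by omega⟩)
  invFun p := (WithLp.equiv 2 _).symm ![p.1 0, p.1 1, p.1 2, p.2 0, p.2 1, p.2 2]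
  map_add' _ _ := rfl
  map_smul' _ _ := rfl
  left_inv z := by
    ext j
    fin_cases j <;> rfl
  right_inv p := by
    ext i <;> fin_cases i <;> rfl

def e4L : E4 ≃ₗ[ℝ] (Fin 3 → ℝ) × ℝ where
  toFun u := (fun i => u (Fin.castLE (by omega) i), u 3)
  invFun p := (WithLp.equiv 2 _).symm ![p.1 0, p.1 1, p.1 2, p.2]
  map_add' _ _ := rfl
  map_smul' _ _ := rfl
  left_inv u := by
    ext j
    fin_cases j <;> rfl
  right_inv p := by
    refine Prod.ext ?_ rfl
    ext i; fin_cases i <;> rfl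

def e6 : E6 ≃L[ℝ] V3 × V3 := e6L.toContinuousLinearEquiv
def e4 : E4 ≃L[ℝ] (Fin 3 → ℝ) × ℝ := e4L.toContinuousLinearEquiv

def gL : E4 →ₗ[ℝ] E6 where
  toFun v := (WithLp.equiv 2 _).symm ![v 0, v 1, v 2, 0, 0, v 3]
  map_add' a b := by
    ext j
    fin_cases j <;>
      simp [WithLp.equiv_symm_apply, PiLp.toLp_apply, Matrix.cons_val_succ, Matrix.cons_val_zero, vec6_five, vec6_four]
  map_smul' c a := by
    ext j
    fin_cases j <;>
      simp [WithLp.equiv_symm_apply, PiLp.toLp_apply, Matrix.cons_val_succ, Matrix.cons_val_zero, vec6_five, vec6_four]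

lemma norm_gL (v : E4) : ‖gL v‖ = ‖v‖ := by
  rw [EuclideanSpace.norm_eq, EuclideanSpace.norm_eq]
  congr 1
  simp [gL, Fin.sum_univ_six, Fin.sum_univ_four, WithLp.equiv_symm_apply, PiLp.toLp_apply,
    Matrix.cons_val_succ, Matrix.cons_val_zero, vec6_five, vec6_four]

def gC : E4 →L[ℝ] E6 := gL.toContinuousLinearMap

/-- reindexing equivalence -/
def eps : (Fin 4 ⊕ Fin 2) ≃ Fin 6 where
  toFun := Sum.elim ![0, 1, 2, 5] ![3, 4]
  invFun := ![Sum.inl 0, Sum.inl 1, Sum.inl 2, Sum.inr 0, Sum.inr 1, Sum.inl 3]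
  left_inv := by decide
  right_inv := by decide

/-- the splitting measurable equivalence `E4 × ℝ² ≃ E6` -/
def phi : (E4 × (ℝ × ℝ)) ≃ᵐ E6 :=
  ((MeasurableEquiv.toLp 2 (Fin 4 → ℝ)).symm.prodCongr (MeasurableEquiv.finTwoArrow).symm).trans
    (((MeasurableEquiv.sumPiEquivProdPi (fun _ : Fin 4 ⊕ Fin 2 => ℝ)).symm).trans
      (((MeasurableEquiv.piCongrLeft (fun _ : Fin 6 => ℝ) eps)).trans
        (MeasurableEquiv.toLp 2 (Fin 6 → ℝ))))

lemma phi_measurePreserving : MeasurePreserving (⇑phi) volume volume := by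
  have h2 : MeasurePreserving (⇑(MeasurableEquiv.finTwoArrow (α := ℝ)).symm) volume volume :=
    (volume_preserving_finTwoArrow ℝ).symm _
  have h4 := EuclideanSpace.volume_preserving_symm_measurableEquiv_toLp (Fin 4)
  have h6 : MeasurePreserving (⇑(MeasurableEquiv.toLp 2 (Fin 6 → ℝ))) volume volume :=
    (EuclideanSpace.volume_preserving_symm_measurableEquiv_toLp (Fin 6)).symm _
  have hs : MeasurePreserving
      (⇑(MeasurableEquiv.sumPiEquivProdPi (fun _ : Fin 4 ⊕ Fin 2 => ℝ)).symm) volume volume :=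
    volume_measurePreserving_sumPiEquivProdPi_symm _
  have hp := volume_measurePreserving_piCongrLeft (fun _ : Fin 6 => ℝ) eps
  exact ((h6.comp hp).comp hs).comp (h4.prod h2)

lemma phi_apply (p : E4 × (ℝ × ℝ)) (i : Fin 4 ⊕ Fin 2) :
    phi p (eps i) = Sum.elim (fun j => p.1 j) ![p.2.1, p.2.2] i := by
  simp only [phi, MeasurableEquiv.trans_apply]
  rw [show ((MeasurableEquiv.toLp 2 (Fin 6 → ℝ))
      ((MeasurableEquiv.piCongrLeft (fun _ : Fin 6 => ℝ) eps) _)) (eps i)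
      = ((MeasurableEquiv.piCongrLeft (fun _ : Fin 6 => ℝ) eps) _) (eps i) from rfl,
    MeasurableEquiv.piCongrLeft_apply_apply]
  cases i <;> rfl

lemma phi_c0 (p : E4 × (ℝ × ℝ)) : phi p 0 = p.1 0 := phi_apply p (Sum.inl 0)
lemma phi_c1 (p : E4 × (ℝ × ℝ)) : phi p 1 = p.1 1 := phi_apply p (Sum.inl 1)
lemma phi_c2 (p : E4 × (ℝ × ℝ)) : phi p 2 = p.1 2 := phi_apply p (Sum.inl 2)
lemma phi_c3 (p : E4 × (ℝ × ℝ)) : phi p 3 = p.2.1 := phi_apply p (Sum.inr 0)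
lemma phi_c4 (p : E4 × (ℝ × ℝ)) : phi p 4 = p.2.2 := phi_apply p (Sum.inr 1)
lemma phi_c5 (p : E4 × (ℝ × ℝ)) : phi p 5 = p.1 3 := phi_apply p (Sum.inl 3)

lemma e6_phi (p : E4 × (ℝ × ℝ)) :
    e6 (phi p) = ((e4 p.1).1, ![p.2.1, p.2.2, (e4 p.1).2]) := by
  refine Prod.ext ?_ ?_
  · funext i
    fin_cases i
    · exact phi_c0 p
    · exact phi_c1 p
    · exact phi_c2 p
  · funext i
    fin_cases i
    · exact phi_c3 p
    · exact phi_c4 p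
    · exact phi_c5 p

lemma inner_g (v : E4) (p : E4 × (ℝ × ℝ)) :
    (inner ℝ (phi p) (gC v) : ℝ) = inner ℝ p.1 v := by
  rw [PiLp.inner_apply, PiLp.inner_apply]
  rw [Fin.sum_univ_six, Fin.sum_univ_four]
  rw [phi_c0, phi_c1, phi_c2, phi_c3, phi_c4, phi_c5]
  simp only [gC, gL, LinearMap.coe_toContinuousLinearMap', LinearMap.coe_mk, AddHom.coe_mk,
    WithLp.equiv_symm_apply, PiLp.toLp_apply, RCLike.inner_apply, conj_trivial]
  simp [Matrix.cons_val_succ, Matrix.cons_val_zero, vec6_four, vec6_five]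

section CLMs
open SchwartzMap Real FourierTransform

def S1 : SchwartzMap (V3 × V3) ℂ →L[ℝ] SchwartzMap E6 ℂ :=
  SchwartzMap.compCLMOfContinuousLinearEquiv ℝ e6

def S2 : SchwartzMap E6 ℂ →L[ℝ] SchwartzMap E6 ℂ := SchwartzMap.fourierTransformCLM ℝ

def S3 : SchwartzMap E6 ℂ →L[ℝ] SchwartzMap E4 ℂ :=
  SchwartzMap.compCLM ℝ (gC.hasTemperateGrowth)
    ⟨1, 1, fun v => by rw [show gC v = gL v from rfl, norm_gL]; nlinarith [norm_nonneg v]⟩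

def S4 : SchwartzMap E4 ℂ →L[ℝ] SchwartzMap E4 ℂ :=
  ((FourierTransform.fourierCLE ℝ (SchwartzMap E4 ℂ)).symm :
    SchwartzMap E4 ℂ ≃L[ℝ] SchwartzMap E4 ℂ).toContinuousLinearMap

def S5 : SchwartzMap E4 ℂ →L[ℝ] SchwartzMap ((Fin 3 → ℝ) × ℝ) ℂ :=
  SchwartzMap.compCLMOfContinuousLinearEquiv ℝ e4.symm

def T0 : SchwartzMap (V3 × V3) ℂ →L[ℝ] SchwartzMap ((Fin 3 → ℝ) × ℝ) ℂ :=
  S5.comp (S4.comp (S3.comp (S2.comp S1)))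

end CLMs

section Key
open Real FourierTransform


lemma S1_apply (F : SchwartzMap (V3 × V3) ℂ) : ⇑(S1 F) = fun z : E6 => F (e6 z) := rfl

lemma integrable_G (F : SchwartzMap (V3 × V3) ℂ) :
    Integrable (fun p : E4 × (ℝ × ℝ) => F (e6 (phi p))) := by
  have h := (S1 F).integrable (μ := volume)
  exact (phi_measurePreserving.integrable_comp_emb phi.measurableEmbedding).2 h

lemma integrable_char_G (F : SchwartzMap (V3 × V3) ℂ) (v : E4) :
    Integrable (fun p : E4 × (ℝ × ℝ) =>
      𝐞 (-(inner ℝ p.1 v : ℝ)) • F (e6 (phi p))) := by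
  have := (Real.fourierIntegral_convergent_iff'
    (V := E4 × (ℝ × ℝ)) (W := E4)
    ((innerSL ℝ (E := E4)).comp (ContinuousLinearMap.fst ℝ E4 (ℝ × ℝ))) v
    (f := fun p : E4 × (ℝ × ℝ) => F (e6 (phi p))) (μ := volume)).2 (integrable_G F)
  exact this

lemma key (F : SchwartzMap (V3 × V3) ℂ) (v : E4) :
    𝓕 (fun u : E4 => RadonT ⇑F (e4 u).1 (e4 u).2) v
      = 𝓕 (fun z : E6 => F (e6 z)) (gC v) := by
  rw [Real.fourier_eq, Real.fourier_eq]
  rw [← phi_measurePreserving.integral_comp phi.measurableEmbedding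
      (fun z : E6 => 𝐞 (-(inner ℝ z (gC v) : ℝ)) • F (e6 z))]
  have hrw : ∀ p : E4 × (ℝ × ℝ),
      𝐞 (-(inner ℝ (phi p) (gC v) : ℝ)) • F (e6 (phi p))
        = 𝐞 (-(inner ℝ p.1 v : ℝ)) • F ((e4 p.1).1, ![p.2.1, p.2.2, (e4 p.1).2]) := by
    intro p
    rw [inner_g, e6_phi]
  calc
    ∫ u : E4, 𝐞 (-(inner ℝ u v : ℝ)) • RadonT ⇑F (e4 u).1 (e4 u).2
      = ∫ u : E4, ∫ w : ℝ × ℝ,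
          𝐞 (-(inner ℝ u v : ℝ)) • F ((e4 u).1, ![w.1, w.2, (e4 u).2]) := by
        refine integral_congr_ae (Filter.Eventually.of_forall fun u => ?_)
        simp only [RadonT, Circle.smul_def]
        exact (integral_const_mul _ _).symm
    _ = ∫ p : E4 × (ℝ × ℝ),
          𝐞 (-(inner ℝ p.1 v : ℝ)) • F ((e4 p.1).1, ![p.2.1, p.2.2, (e4 p.1).2]) := by
        exact (MeasureTheory.integral_prod
          (f := fun p : E4 × (ℝ × ℝ) =>
            𝐞 (-(inner ℝ p.1 v : ℝ)) • F ((e4 p.1).1, ![p.2.1, p.2.2, (e4 p.1).2]))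
          ((integrable_char_G F v).congr
            (Filter.Eventually.of_forall fun p => by simp only [e6_phi]))).symm
    _ = ∫ p : E4 × (ℝ × ℝ), 𝐞 (-(inner ℝ (phi p) (gC v) : ℝ)) • F (e6 (phi p)) := by
        exact (integral_congr_ae (Filter.Eventually.of_forall fun p => (hrw p))).symm

end Key

section Part1
open Real FourierTransform SchwartzMap

lemma cont3 {X : Type*} [TopologicalSpace X] {a b c : X → ℝ} (ha : Continuous a)
    (hb : Continuous b) (hc : Continuous c) :
    Continuous fun x => (![a x, b x, c x] : Fin 3 → ℝ) := by
  refine continuous_pi fun i => ?_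
  fin_cases i
  · simpa using ha
  · simpa using hb
  · simpa using hc

lemma decay_bound (F : SchwartzMap (V3 × V3) ℂ) :
    ∃ C : ℝ, 0 ≤ C ∧ ∀ z : V3 × V3, ‖F z‖ ≤ C * ((1 + ‖z‖) ^ (3 : ℕ))⁻¹ := by
  refine ⟨2 ^ 3 * ((Finset.Iic ((3 : ℕ), (0 : ℕ))).sup (schwartzSeminormFamily ℝ _ _)) F,
    by positivity, fun z => ?_⟩
  have h := one_add_le_sup_seminorm_apply (𝕜 := ℝ) (m := ((3 : ℕ), (0 : ℕ)))
    le_rfl le_rfl F z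
  rw [norm_iteratedFDeriv_zero] at h
  have hpos : (0 : ℝ) < (1 + ‖z‖) ^ (3 : ℕ) := by positivity
  calc ‖F z‖ ≤ (2 ^ 3 * ((Finset.Iic ((3:ℕ),(0:ℕ))).sup (schwartzSeminormFamily ℝ _ _)) F)
      / (1 + ‖z‖) ^ (3 : ℕ) := by
        rw [le_div_iff₀ hpos]
        calc ‖F z‖ * (1 + ‖z‖) ^ (3:ℕ) = (1 + ‖z‖) ^ (3:ℕ) * ‖F z‖ := by ring
        _ ≤ _ := h
  _ = _ := div_eq_mul_inv _ _

lemma bound_integrable (C : ℝ) :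
    Integrable (fun w : ℝ × ℝ => C * ((1 + ‖w‖) ^ (3 : ℕ))⁻¹) := by
  have h : Integrable (fun w : ℝ × ℝ => (1 + ‖w‖) ^ (-(3 : ℝ))) :=
    integrable_one_add_norm (by simp; norm_num)
  have : (fun w : ℝ × ℝ => (1 + ‖w‖) ^ (-(3 : ℝ)))
      = fun w : ℝ × ℝ => ((1 + ‖w‖) ^ (3 : ℕ))⁻¹ := by
    funext w
    have h1 : (1 + ‖w‖) ^ (-(3:ℝ)) = ((1 + ‖w‖) ^ (3:ℝ))⁻¹ := Real.rpow_neg (by positivity) 3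
    have h2 : (1 + ‖w‖) ^ (3:ℝ) = (1 + ‖w‖) ^ (3:ℕ) := by
      rw [← Real.rpow_natCast]; norm_num
    rw [h1, h2]
  rw [this] at h
  exact h.const_mul C

lemma norm_w_le (q : Fin 3 → ℝ) (t : ℝ) (w : ℝ × ℝ) :
    ‖w‖ ≤ ‖((q, ![w.1, w.2, t]) : V3 × V3)‖ := by
  have h1 : |w.1| ≤ ‖(![w.1, w.2, t] : V3)‖ := by
    simpa using norm_le_pi_norm (![w.1, w.2, t] : V3) 0
  have h2 : |w.2| ≤ ‖(![w.1, w.2, t] : V3)‖ := by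
    simpa using norm_le_pi_norm (![w.1, w.2, t] : V3) 1
  have h3 : ‖(![w.1, w.2, t] : V3)‖ ≤ ‖((q, ![w.1, w.2, t]) : V3 × V3)‖ :=
    norm_snd_le ((q, ![w.1, w.2, t]) : V3 × V3)
  have : ‖w‖ = max |w.1| |w.2| := rfl
  rw [this]
  exact le_trans (max_le h1 h2) h3

lemma pointwise_bound (F : SchwartzMap (V3 × V3) ℂ) {C : ℝ} (hC : 0 ≤ C)
    (hF : ∀ z : V3 × V3, ‖F z‖ ≤ C * ((1 + ‖z‖) ^ (3 : ℕ))⁻¹)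
    (q : Fin 3 → ℝ) (t : ℝ) (w : ℝ × ℝ) :
    ‖F (q, ![w.1, w.2, t])‖ ≤ C * ((1 + ‖w‖) ^ (3 : ℕ))⁻¹ := by
  refine le_trans (hF _) (mul_le_mul_of_nonneg_left ?_ hC)
  have hle : (1 + ‖w‖) ^ (3:ℕ) ≤ (1 + ‖(q, ![w.1, w.2, t])‖) ^ (3:ℕ) := by
    gcongr
    exact norm_w_le q t w
  exact inv_anti₀ (by positivity) hle

lemma cont_Rfun (F : SchwartzMap (V3 × V3) ℂ) :
    Continuous fun q : (Fin 3 → ℝ) × ℝ => RadonT ⇑F q.1 q.2 := by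
  obtain ⟨C, hC0, hC⟩ := decay_bound F
  simp only [RadonT]
  refine continuous_of_dominated (bound := fun w => C * ((1 + ‖w‖) ^ (3 : ℕ))⁻¹)
    (fun q => ?_) (fun q => Filter.Eventually.of_forall fun w => ?_)
    (bound_integrable C) (Filter.Eventually.of_forall fun w => ?_)
  · exact (F.continuous.comp ((continuous_const.prodMk
      (cont3 continuous_fst continuous_snd continuous_const)))).aestronglyMeasurable
  · exact pointwise_bound F hC0 hC q.1 q.2 w
  · exact F.continuous.comp (continuous_fst.prodMk
      (cont3 continuous_const continuous_const continuous_snd))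

lemma integrable_f4 (F : SchwartzMap (V3 × V3) ℂ) :
    Integrable (fun u : E4 => RadonT ⇑F (e4 u).1 (e4 u).2) := by
  have h2 : Integrable (fun p : E4 × (ℝ × ℝ) =>
      F ((e4 p.1).1, ![p.2.1, p.2.2, (e4 p.1).2])) (volume.prod volume) :=
    (integrable_G F).congr (Filter.Eventually.of_forall fun p => by simp only [e6_phi])
  have := h2.integral_prod_left
  simpa only [RadonT] using this

lemma T0_apply (F : SchwartzMap (V3 × V3) ℂ) (x : V3) (t : ℝ) :
    T0 F (x, t) = RadonT ⇑F x t := by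
  set s := S3 (S2 (S1 F)) with hs_def
  have hs : ⇑s = 𝓕 (fun u : E4 => RadonT ⇑F (e4 u).1 (e4 u).2) := by
    funext v
    have h0 : s v = 𝓕 (⇑(S1 F)) (gC v) := rfl
    rw [h0, S1_apply, ← key]
  have h1 : T0 F (x, t)
      = ((FourierTransform.fourierCLE ℝ (SchwartzMap E4 ℂ)).symm s) (e4.symm (x, t)) := rfl
  have hcont : Continuous fun u : E4 => RadonT ⇑F (e4 u).1 (e4 u).2 :=
    (cont_Rfun F).comp e4.continuous
  rw [h1, FourierTransform.fourierCLE_symm_apply, SchwartzMap.fourierInv_coe, hs,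
    Continuous.fourierInv_fourier_eq hcont
      (integrable_f4 F) (by rw [← hs]; exact s.integrable)]
  have h2 : e4 (e4.symm (x, t)) = (x, t) := e4.apply_symm_apply _
  simp only [h2]

end Part1

section Part2






variable {A : Matrix (Fin 2) (Fin 2) ℝ}

lemma det_sq (hA : A * Aᵀ = 1) : A.det * A.det = 1 := by
  have h := congrArg Matrix.det hA
  rwa [Matrix.det_mul, Matrix.det_transpose, Matrix.det_one] at h

def kmat (A : Matrix (Fin 2) (Fin 2) ℝ) : Mat3 :=
  Matrix.of ![![A 0 0, A 0 1, 0], ![A 1 0, A 1 1, 0], ![0, 0, A.det]]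

lemma kmat_mem (hA : A * Aᵀ = 1) : kmat A ∈ SO3 := by
  have h := fun i j => congrFun (congrFun hA i) j
  simp only [Matrix.mul_apply, Fin.sum_univ_two, Matrix.transpose_apply] at h
  have h00 := h 0 0; have h01 := h 0 1; have h10 := h 1 0; have h11 := h 1 1
  simp [Matrix.one_apply] at h00 h01 h10 h11
  have hd := det_sq hA
  constructor
  · ext i j
    rw [Matrix.mul_apply, Fin.sum_univ_three]
    simp only [Matrix.transpose_apply]
    fin_cases i <;> fin_cases j <;>
      simp [kmat, Matrix.one_apply] <;> linarith
  · have h2 : (kmat A).det = A.det * (A 0 0 * A 1 1 - A 0 1 * A 1 0) := by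
      rw [Matrix.det_fin_three]
      simp [kmat]
      ring
    rw [h2, ← Matrix.det_fin_two, hd]

lemma kmat_mulVec (A : Matrix (Fin 2) (Fin 2) ℝ) (x : V3) :
    (kmat A).mulVec x
      = ![A.mulVec ![x 0, x 1] 0, A.mulVec ![x 0, x 1] 1, A.det * x 2] := by
  funext i
  fin_cases i <;>
    simp [kmat, Matrix.mulVec, dotProduct, Fin.sum_univ_three, Fin.sum_univ_two]

def Aequiv (hA : A * Aᵀ = 1) : (Fin 2 → ℝ) ≃ₗ[ℝ] (Fin 2 → ℝ) :=
  Matrix.toLin'OfInv (mul_eq_one_comm.mp hA) hA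

lemma Aequiv_mp (hA : A * Aᵀ = 1) :
    MeasurePreserving (fun y : Fin 2 → ℝ => A.mulVec y) volume volume := by
  have hd := det_sq hA
  have hdet : A.det ≠ 0 := fun h => by rw [h, mul_zero] at hd; norm_num at hd
  have habs : |A.det| = 1 := by
    rcases mul_self_eq_one_iff.mp hd with h | h <;> rw [h] <;> norm_num
  refine ⟨?_, ?_⟩
  · exact (Matrix.toLin' A).continuous_of_finiteDimensional.measurable
  · have := Real.map_matrix_volume_pi_eq_smul_volume_pi hdet
    rw [show (fun y : Fin 2 → ℝ => A.mulVec y) = ⇑(Matrix.toLin' A) from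
      funext fun y => (Matrix.toLin'_apply A y).symm]
    rw [this, abs_inv, habs]
    simp

def psie (hA : A * Aᵀ = 1) : (ℝ × ℝ) ≃ᵐ (ℝ × ℝ) :=
  (MeasurableEquiv.finTwoArrow.symm).trans
    ((((Aequiv hA).toContinuousLinearEquiv.toHomeomorph).toMeasurableEquiv).trans
      MeasurableEquiv.finTwoArrow)

lemma psie_mp (hA : A * Aᵀ = 1) : MeasurePreserving (⇑(psie hA)) volume volume := by
  have h1 : MeasurePreserving (⇑(MeasurableEquiv.finTwoArrow (α := ℝ)).symm) volume volume :=
    (volume_preserving_finTwoArrow ℝ).symm _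
  have h2 : MeasurePreserving
      (⇑(((Aequiv hA).toContinuousLinearEquiv.toHomeomorph).toMeasurableEquiv))
      volume volume := by
    exact Aequiv_mp hA
  exact ((volume_preserving_finTwoArrow ℝ).comp h2).comp h1

lemma psie_apply (hA : A * Aᵀ = 1) (w : ℝ × ℝ) :
    psie hA w = (A.mulVec ![w.1, w.2] 0, A.mulVec ![w.1, w.2] 1) := by
  have hv : (MeasurableEquiv.finTwoArrow (α := ℝ)).symm w = ![w.1, w.2] := by
    funext i; fin_cases i <;> rfl
  show (MeasurableEquiv.finTwoArrow
    (((Aequiv hA).toContinuousLinearEquiv.toHomeomorph.toMeasurableEquiv)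
      ((MeasurableEquiv.finTwoArrow (α := ℝ)).symm w))) = _
  rw [hv]
  have h2 : ((Aequiv hA).toContinuousLinearEquiv.toHomeomorph.toMeasurableEquiv)
      (![w.1, w.2] : Fin 2 → ℝ) = A.mulVec ![w.1, w.2] := Matrix.toLin'_apply A _
  rw [h2]
  rfl

end Part2

lemma radon_invK (F : SchwartzMap (V3 × V3) ℂ) (hF : Inv3 ⇑F) :
    ∀ A ∈ O2, ∀ p : (Fin 3 → ℝ) × ℝ,
      RadonT ⇑F (KAct A p).1 (KAct A p).2 = RadonT ⇑F p.1 p.2 := by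
  intro A hA p
  have hA' : A * Aᵀ = 1 := hA
  simp only [KAct, RadonT]
  rw [← (psie_mp hA').integral_comp' (fun w : ℝ × ℝ =>
    F (![A.mulVec ![p.1 0, p.1 1] 0, A.mulVec ![p.1 0, p.1 1] 1, A.det * p.1 2],
       ![w.1, w.2, A.det * p.2]))]
  refine integral_congr_ae (Filter.Eventually.of_forall fun w => ?_)
  simp only
  rw [psie_apply hA']
  have h1 : (![A.mulVec ![p.1 0, p.1 1] 0, A.mulVec ![p.1 0, p.1 1] 1,
      A.det * p.1 2] : V3) = (kmat A).mulVec p.1 := (kmat_mulVec A p.1).symm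
  have h2 : (![A.mulVec ![w.1, w.2] 0, A.mulVec ![w.1, w.2] 1, A.det * p.2] : V3)
      = (kmat A).mulVec ![w.1, w.2, p.2] := by
    rw [kmat_mulVec]
    simp
  rw [h1, h2]
  exact hF (kmat A) (kmat_mem hA') p.1 ![w.1, w.2, p.2]


/-- The Radon-type map `R` is a continuous linear map `𝒮(ℝ³×ℝ³) → 𝒮(ℝ³×ℝ)` sending
`SO(3)`-invariant functions to `K'`-invariant functions. -/
theorem statement10 :
    ∃ T : SchwartzMap (V3 × V3) ℂ →L[ℝ] SchwartzMap ((Fin 3 → ℝ) × ℝ) ℂ,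
      (∀ (F : SchwartzMap (V3 × V3) ℂ) (x : V3) (t : ℝ), T F (x, t) = RadonT ⇑F x t) ∧
      (∀ F : SchwartzMap (V3 × V3) ℂ, Inv3 ⇑F → InvK' ⇑(T F)) := by
  refine ⟨T0, fun F x t => T0_apply F x t, fun F hF A hA p => ?_⟩
  obtain ⟨x, t⟩ := p
  have h1 : (T0 F) (KAct A (x, t))
      = RadonT ⇑F (KAct A (x, t)).1 (KAct A (x, t)).2 := T0_apply F _ _
  rw [h1, radon_invK F hF A hA (x, t), ← T0_apply F x t]
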